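/- arXiv:1801.08809 — 2 statements merged into one kernel-verified Lean document; each statement's English description precedes it below -/
import Mathlib

section
/- Let λ > 0 and μ > 0 and C^{-1}σ := (1/(2μ))σ^D + (1/(n(nλ+2μ)))(tr σ)I on ℝ^{n×n}. Then the bilinear form (σ,τ) ↦ C^{-1}σ : τ is symmetric and satisfies |C^{-1}σ : τ| ≤ max(1/(2μ), 1/(nλ+2μ)) · ‖σ‖_F ‖τ‖_F, a bound that stays bounded as λ → ∞ (uniformly in λ ≥ 0). -/
open scoped BigOperators

noncomputable def frobInner {n : ℕ} (σ τ : Matrix (Fin n) (Fin n) ℝ) : ℝ :=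
  ∑ i, ∑ j, σ i j * τ i j

noncomputable def frobNorm {n : ℕ} (σ : Matrix (Fin n) (Fin n) ℝ) : ℝ :=
  Real.sqrt (frobInner σ σ)

noncomputable def dev {n : ℕ} (σ : Matrix (Fin n) (Fin n) ℝ) : Matrix (Fin n) (Fin n) ℝ :=
  σ - ((n : ℝ)⁻¹ * Matrix.trace σ) • (1 : Matrix (Fin n) (Fin n) ℝ)

noncomputable def hookeInv {n : ℕ} (l μ : ℝ) (σ : Matrix (Fin n) (Fin n) ℝ) :
    Matrix (Fin n) (Fin n) ℝ :=
  (1 / (2 * μ)) • dev σ +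
    ((1 / (n * (n * l + 2 * μ))) * Matrix.trace σ) • (1 : Matrix (Fin n) (Fin n) ℝ)

section Aux
variable {n : ℕ}

lemma frob_comm (σ τ : Matrix (Fin n) (Fin n) ℝ) : frobInner σ τ = frobInner τ σ := by
  simp [frobInner, mul_comm]

lemma frob_smul (c : ℝ) (σ τ : Matrix (Fin n) (Fin n) ℝ) :
    frobInner (c • σ) τ = c * frobInner σ τ := by
  simp [frobInner, Matrix.smul_apply, Finset.mul_sum, mul_assoc]

lemma frob_sub (σ ρ τ : Matrix (Fin n) (Fin n) ℝ) :
    frobInner (σ - ρ) τ = frobInner σ τ - frobInner ρ τ := by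
  simp [frobInner, Matrix.sub_apply, sub_mul, Finset.sum_sub_distrib]

lemma frob_add (σ ρ τ : Matrix (Fin n) (Fin n) ℝ) :
    frobInner (σ + ρ) τ = frobInner σ τ + frobInner ρ τ := by
  simp [frobInner, Matrix.add_apply, add_mul, Finset.sum_add_distrib]

lemma frob_one (τ : Matrix (Fin n) (Fin n) ℝ) : frobInner 1 τ = Matrix.trace τ := by
  simp [frobInner, Matrix.one_apply, Matrix.trace, Matrix.diag]

lemma frob_nonneg (σ : Matrix (Fin n) (Fin n) ℝ) : 0 ≤ frobInner σ σ := by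
  apply Finset.sum_nonneg; intro i _; apply Finset.sum_nonneg; intro j _; exact mul_self_nonneg _

lemma frobNorm_sq (σ : Matrix (Fin n) (Fin n) ℝ) : frobNorm σ ^ 2 = frobInner σ σ := by
  rw [frobNorm, Real.sq_sqrt (frob_nonneg σ)]

lemma frob_cs (σ τ : Matrix (Fin n) (Fin n) ℝ) :
    |frobInner σ τ| ≤ frobNorm σ * frobNorm τ := by
  have h : frobInner σ τ ^ 2 ≤ frobInner σ σ * frobInner τ τ := by
    have := Finset.sum_mul_sq_le_sq_mul_sq (Finset.univ : Finset (Fin n × Fin n))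
      (fun p => σ p.1 p.2) (fun p => τ p.1 p.2)
    simpa [frobInner, ← Finset.sum_product', pow_two] using this
  calc |frobInner σ τ| = Real.sqrt (frobInner σ τ ^ 2) := (Real.sqrt_sq_eq_abs _).symm
    _ ≤ Real.sqrt (frobInner σ σ * frobInner τ τ) := Real.sqrt_le_sqrt h
    _ = frobNorm σ * frobNorm τ := Real.sqrt_mul (frob_nonneg σ) _

lemma frob_dev_left (σ τ : Matrix (Fin n) (Fin n) ℝ) :
    frobInner (dev σ) τ =
      frobInner σ τ - (n : ℝ)⁻¹ * Matrix.trace σ * Matrix.trace τ := by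
  rw [dev, frob_sub, frob_smul, frob_one]

lemma trace_dev (hn : 1 ≤ n) (σ : Matrix (Fin n) (Fin n) ℝ) :
    Matrix.trace (dev σ) = 0 := by
  have hn0 : (n : ℝ) ≠ 0 := by positivity
  simp [dev, Matrix.trace_smul, Matrix.trace_one]
  field_simp
  ring

lemma frob_dev_dev (hn : 1 ≤ n) (σ τ : Matrix (Fin n) (Fin n) ℝ) :
    frobInner (dev σ) (dev τ) =
      frobInner σ τ - (n : ℝ)⁻¹ * (Matrix.trace σ * Matrix.trace τ) := by
  rw [frob_dev_left, trace_dev hn, frob_comm σ (dev τ), frob_dev_left, frob_comm τ σ]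
  ring

lemma frob_dev_dev' (hn : 1 ≤ n) (σ τ : Matrix (Fin n) (Fin n) ℝ) :
    frobInner (dev σ) τ = frobInner (dev σ) (dev τ) := by
  rw [frob_dev_left, frob_dev_dev hn]
  ring

lemma hooke_key (hn : 1 ≤ n) (l μ : ℝ) (σ τ : Matrix (Fin n) (Fin n) ℝ) :
    frobInner (hookeInv l μ σ) τ =
      (1 / (2 * μ)) * frobInner (dev σ) (dev τ) +
        (1 / (n * (n * l + 2 * μ))) * (Matrix.trace σ * Matrix.trace τ) := by
  rw [hookeInv, frob_add, frob_smul, frob_smul, frob_one, frob_dev_dev' hn]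
  ring

end Aux

lemma two_cs (u1 v1 u2 v2 : ℝ) (h1 : 0 ≤ u1) (h2 : 0 ≤ v1) (h3 : 0 ≤ u2) (h4 : 0 ≤ v2) :
    u1 * u2 + v1 * v2 ≤ Real.sqrt (u1 ^ 2 + v1 ^ 2) * Real.sqrt (u2 ^ 2 + v2 ^ 2) := by
  rw [← Real.sqrt_mul (by positivity)]
  rw [show u1 * u2 + v1 * v2 = Real.sqrt ((u1 * u2 + v1 * v2) ^ 2) from
    (Real.sqrt_sq (by positivity)).symm]
  apply Real.sqrt_le_sqrt
  nlinarith [sq_nonneg (u1 * v2 - u2 * v1)]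

/-- The bilinear form `(σ,τ) ↦ C⁻¹σ : τ` is symmetric, bounded by
`max(1/(2μ), 1/(nλ+2μ)) ‖σ‖_F ‖τ‖_F`, and this bound stays bounded
uniformly in λ ≥ 0 (it is at most `1/(2μ)`). -/
theorem hookeInv_form_symm_bounded (n : ℕ) (hn : 1 ≤ n) (l μ : ℝ)
    (hl : 0 < l) (hμ : 0 < μ) :
    (∀ σ τ : Matrix (Fin n) (Fin n) ℝ,
        frobInner (hookeInv l μ σ) τ = frobInner (hookeInv l μ τ) σ) ∧
    (∀ σ τ : Matrix (Fin n) (Fin n) ℝ,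
        |frobInner (hookeInv l μ σ) τ| ≤
          max (1 / (2 * μ)) (1 / (n * l + 2 * μ)) * frobNorm σ * frobNorm τ) ∧
    (∀ l' : ℝ, 0 ≤ l' →
        max (1 / (2 * μ)) (1 / (n * l' + 2 * μ)) ≤ 1 / (2 * μ)) := by
  have hn0 : (0 : ℝ) < n := by exact_mod_cast hn
  have hden : (0 : ℝ) < n * l + 2 * μ := by positivity
  refine ⟨fun σ τ => ?_, fun σ τ => ?_, fun l' hl' => ?_⟩
  · rw [hooke_key hn, hooke_key hn, frob_comm (dev σ)]
    ring
  · set a := 1 / (2 * μ) with ha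
    set e := 1 / (n * l + 2 * μ) with he
    have hae : 0 < a := by positivity
    have hee : 0 < e := by positivity
    set c := max a e with hc
    have hac : a ≤ c := le_max_left _ _
    have hec : e ≤ c := le_max_right _ _
    have hc0 : 0 < c := lt_of_lt_of_le hae hac
    set u1 := frobNorm (dev σ)
    set u2 := frobNorm (dev τ)
    set v1 := Real.sqrt ((n : ℝ)⁻¹) * |Matrix.trace σ|
    set v2 := Real.sqrt ((n : ℝ)⁻¹) * |Matrix.trace τ|
    have hu1 : 0 ≤ u1 := Real.sqrt_nonneg _
    have hu2 : 0 ≤ u2 := Real.sqrt_nonneg _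
    have hv1 : 0 ≤ v1 := by positivity
    have hv2 : 0 ≤ v2 := by positivity
    have hv1sq : v1 ^ 2 = (n : ℝ)⁻¹ * Matrix.trace σ ^ 2 := by
      rw [mul_pow, Real.sq_sqrt (by positivity), sq_abs]
    have hv2sq : v2 ^ 2 = (n : ℝ)⁻¹ * Matrix.trace τ ^ 2 := by
      rw [mul_pow, Real.sq_sqrt (by positivity), sq_abs]
    have hns : frobNorm σ = Real.sqrt (u1 ^ 2 + v1 ^ 2) := by
      rw [frobNorm, frobNorm_sq, frob_dev_dev hn, hv1sq]
      ring_nf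
    have hnt : frobNorm τ = Real.sqrt (u2 ^ 2 + v2 ^ 2) := by
      rw [frobNorm, frobNorm_sq, frob_dev_dev hn, hv2sq]
      ring_nf
    have key := hooke_key hn l μ σ τ
    have hbnd : |frobInner (hookeInv l μ σ) τ| ≤ a * (u1 * u2) + e * (v1 * v2) := by
      rw [key]
      calc |a * frobInner (dev σ) (dev τ) + 1 / (n * (n * l + 2 * μ)) *
              (Matrix.trace σ * Matrix.trace τ)|
          ≤ |a * frobInner (dev σ) (dev τ)| +
            |1 / (n * (n * l + 2 * μ)) * (Matrix.trace σ * Matrix.trace τ)| := abs_add_le _ _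
        _ ≤ a * (u1 * u2) + e * (v1 * v2) := by
            apply add_le_add
            · rw [abs_mul, abs_of_pos hae]
              exact mul_le_mul_of_nonneg_left (frob_cs _ _) hae.le
            · rw [abs_mul]
              have h1 : |1 / ((n : ℝ) * (n * l + 2 * μ))| = e * (n : ℝ)⁻¹ := by
                rw [abs_of_pos (by positivity), he]
                field_simp
              rw [h1]
              have h2 : v1 * v2 = (n : ℝ)⁻¹ * (|Matrix.trace σ| * |Matrix.trace τ|) := by
                rw [show v1 * v2 = Real.sqrt ((n:ℝ)⁻¹) * Real.sqrt ((n:ℝ)⁻¹) *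
                  (|Matrix.trace σ| * |Matrix.trace τ|) by ring,
                  ← Real.sqrt_mul (by positivity), Real.sqrt_mul_self (by positivity)]
              rw [h2, abs_mul]
              nlinarith [abs_nonneg (Matrix.trace σ), abs_nonneg (Matrix.trace τ)]
    calc |frobInner (hookeInv l μ σ) τ| ≤ a * (u1 * u2) + e * (v1 * v2) := hbnd
      _ ≤ c * (u1 * u2) + c * (v1 * v2) := by
          apply add_le_add <;> apply mul_le_mul_of_nonneg_right <;> first | assumption | positivity
      _ = c * (u1 * u2 + v1 * v2) := by ring
      _ ≤ c * (Real.sqrt (u1 ^ 2 + v1 ^ 2) * Real.sqrt (u2 ^ 2 + v2 ^ 2)) := by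
          exact mul_le_mul_of_nonneg_left (two_cs u1 v1 u2 v2 hu1 hv1 hu2 hv2) hc0.le
      _ = c * frobNorm σ * frobNorm τ := by rw [hns, hnt]; ring
  · apply max_le le_rfl
    apply one_div_le_one_div_of_le (by positivity)
    nlinarith
end

section
/- Let X be a Banach space, T : X → X a bounded linear operator, and z ∈ ℂ (or ℝ) with z ≠ 0. Suppose there is a constant c > 0 such that ‖(zI − T)y‖ ≥ c‖y‖ for all y in the range of T. Then for every x ∈ X, ‖(zI − T)x‖ ≥ (|z| c / (c + ‖T‖)) ‖x‖. -/
/-- If `‖(zI - T)y‖ ≥ c‖y‖` for all `y` in the range of `T`, then for every `x`,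
`‖(zI - T)x‖ ≥ (|z| c / (c + ‖T‖)) ‖x‖`. -/
theorem resolvent_bound_from_range {X : Type*} [NormedAddCommGroup X]
    [NormedSpace ℝ X] [CompleteSpace X]
    (T : X →L[ℝ] X) (z : ℝ) (hz : z ≠ 0) (c : ℝ) (hc : 0 < c)
    (hrange : ∀ x : X, c * ‖T x‖ ≤ ‖z • T x - T (T x)‖) :
    ∀ x : X, |z| * c / (c + ‖T‖) * ‖x‖ ≤ ‖z • x - T x‖ := by
  intro x
  set u := z • x - T x with hu
  have hT : T u = z • T x - T (T x) := by simp [hu, map_sub, map_smul]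
  have h1 : c * ‖T x‖ ≤ ‖T u‖ := by rw [hT]; exact hrange x
  have h2 : ‖T u‖ ≤ ‖T‖ * ‖u‖ := T.le_opNorm u
  have h4 : |z| * ‖x‖ ≤ ‖u‖ + ‖T x‖ := by
    have : z • x = u + T x := by rw [hu]; abel
    calc |z| * ‖x‖ = ‖z • x‖ := by rw [norm_smul, Real.norm_eq_abs]
      _ = ‖u + T x‖ := by rw [this]
      _ ≤ ‖u‖ + ‖T x‖ := norm_add_le _ _
  have hpos : 0 < c + ‖T‖ := add_pos_of_pos_of_nonneg hc (norm_nonneg _)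
  rw [div_mul_eq_mul_div, div_le_iff₀ hpos]
  nlinarith [norm_nonneg u, norm_nonneg (T x), norm_nonneg x, abs_nonneg z]
end
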